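/- The generating function for the total number of hooks of length 1 in all ℓ-distinct partitions of n satisfies ∑_{n≥0} d_{ℓ,1}(n) q^n = ((q^ℓ;q^ℓ)_∞/(q;q)_∞) · ∑_{m≥0} q^{m+1}(1-q^{(ℓ-1)(m+1)})/(1-q^{ℓ(m+1)}) as formal power series. -/

import Mathlib

open PowerSeries

/-- The `i`-th largest part (0-indexed) of a partition, or `0` if `i` is too large. -/
def partAt {n : ℕ} (p : Nat.Partition n) (i : ℕ) : ℕ :=
  ((p.parts.sort (· ≤ ·)).reverse).getD i 0

/-- The number of parts of `p` exceeding `j`, i.e. the `j`-th column length (0-indexed). -/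
def colAt {n : ℕ} (p : Nat.Partition n) (j : ℕ) : ℕ :=
  (p.parts.filter (fun a => j < a)).card

/-- The number of cells in the Young diagram of `p` whose hook length equals `t`.
The cell in row `i`, column `j` (0-indexed) has hook length
`(λᵢ - 1 - j) + (λ'ⱼ - 1 - i) + 1`. -/
def hookCount {n : ℕ} (p : Nat.Partition n) (t : ℕ) : ℕ :=
  ((Finset.range n ×ˢ Finset.range n).filter
    (fun ij => ij.2 < partAt p ij.1 ∧
      (partAt p ij.1 - ij.2) + (colAt p ij.2 - ij.1) - 1 = t)).card

/-- `dCount ℓ t n` is the total number of hooks of length `t` over all `ℓ`-distinct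
partitions of `n` (partitions in which every part appears fewer than `ℓ` times). -/
def dCount (ℓ t n : ℕ) : ℕ :=
  ∑ p ∈ Finset.univ.filter (fun p : Nat.Partition n => ∀ a ∈ p.parts, p.parts.count a < ℓ),
    hookCount p t

noncomputable instance : TopologicalSpace (PowerSeries ℚ) :=
  inferInstanceAs (TopologicalSpace ((Unit →₀ ℕ) → ℚ))

namespace DGF


open Finset Filter Topology

instance : T2Space (PowerSeries ℚ) := inferInstanceAs (T2Space ((Unit →₀ ℕ) → ℚ))

lemma coeff_stab_tendsto (F : Finset ℕ → ℚ⟦X⟧) (L : ℚ⟦X⟧)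
    (h : ∀ (n : ℕ) (S : Finset ℕ), range (n + 1) ⊆ S → coeff n (F S) = coeff n L) :
    Tendsto F atTop (𝓝 L) := by
  have key : Tendsto (fun S => (F S : (Unit →₀ ℕ) → ℚ)) atTop (𝓝 (L : (Unit →₀ ℕ) → ℚ)) := by
    apply tendsto_pi_nhds.mpr
    intro d
    have e1 : ∀ x : ℚ⟦X⟧, (x : (Unit →₀ ℕ) → ℚ) d = coeff (d ()) x := by
      intro x
      have hd : d = Finsupp.single () (d ()) := Finsupp.unique_single d
      conv_lhs => rw [hd]
      rfl
    have ev : (fun S => (F S : (Unit →₀ ℕ) → ℚ) d) =ᶠ[atTop]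
        (fun _ => (L : (Unit →₀ ℕ) → ℚ) d) := by
      filter_upwards [Filter.eventually_ge_atTop (range (d () + 1))] with S hS
      rw [e1 (F S), e1 L]
      exact h (d ()) S hS
    exact Tendsto.congr' ev.symm tendsto_const_nhds
  exact key

lemma coeff_mul_congr {a b c : ℚ⟦X⟧} {n : ℕ} (h : ∀ i ≤ n, coeff i a = coeff i b) :
    coeff n (c * a) = coeff n (c * b) := by
  rw [coeff_mul, coeff_mul]
  refine Finset.sum_congr rfl ?_
  rintro ⟨i, j⟩ hij
  rw [Finset.HasAntidiagonal.mem_antidiagonal] at hij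
  rw [h j (by omega)]

lemma dvd_prod_sub_one {K : ℕ} {f : ℕ → ℚ⟦X⟧} {S : Finset ℕ}
    (h : ∀ j ∈ S, (X : ℚ⟦X⟧) ^ K ∣ f j - 1) : (X : ℚ⟦X⟧) ^ K ∣ (∏ j ∈ S, f j) - 1 := by
  classical
  induction S using Finset.induction_on with
  | empty => simp
  | insert a s hx ih =>
    rw [Finset.prod_insert hx]
    have h1 : (X : ℚ⟦X⟧) ^ K ∣ f a - 1 := h a (Finset.mem_insert_self a s)
    have h2 : (X : ℚ⟦X⟧) ^ K ∣ (∏ j ∈ s, f j) - 1 := ih fun j hj => h j (Finset.mem_insert_of_mem hj)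
    have : f a * (∏ j ∈ s, f j) - 1 =
        (f a - 1) * (∏ j ∈ s, f j) + ((∏ j ∈ s, f j) - 1) := by ring
    rw [this]
    exact dvd_add (h1.mul_right _) h2

lemma coeff_eq_of_dvd {a b : ℚ⟦X⟧} {K n : ℕ} (h : (X : ℚ⟦X⟧) ^ K ∣ a - b) (hn : n < K) :
    coeff n a = coeff n b := by
  rw [X_pow_dvd_iff] at h
  have := h n hn
  rw [map_sub, sub_eq_zero] at this
  exact this

lemma coeff_prod_stab {f : ℕ → ℚ⟦X⟧} (hf : ∀ j, (X : ℚ⟦X⟧) ^ (j + 1) ∣ f j - 1)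
    (n : ℕ) (S : Finset ℕ) (hS : range (n + 1) ⊆ S) :
    coeff n (∏ j ∈ S, f j) = coeff n (∏ j ∈ range (n + 1), f j) := by
  classical
  rw [← Finset.prod_sdiff hS]
  set u := ∏ j ∈ S \ range (n + 1), f j with hu
  set v := ∏ j ∈ range (n + 1), f j with hv
  have hdvd : (X : ℚ⟦X⟧) ^ (n + 1) ∣ u - 1 := by
    apply dvd_prod_sub_one
    intro j hj
    rw [Finset.mem_sdiff, Finset.mem_range] at hj
    exact dvd_trans (pow_dvd_pow _ (by omega)) (hf j)
  have : u * v - v = (u - 1) * v := by ring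
  have h2 : (X : ℚ⟦X⟧) ^ (n + 1) ∣ u * v - v := this ▸ hdvd.mul_right v
  exact coeff_eq_of_dvd h2 (Nat.lt_succ_self n)

lemma coeff_sum_stab {f : ℕ → ℚ⟦X⟧} (hf : ∀ j, (X : ℚ⟦X⟧) ^ (j + 1) ∣ f j)
    (n : ℕ) (S : Finset ℕ) (hS : range (n + 1) ⊆ S) :
    coeff n (∑ j ∈ S, f j) = coeff n (∑ j ∈ range (n + 1), f j) := by
  classical
  rw [← Finset.sum_sdiff hS]
  have : (X : ℚ⟦X⟧) ^ (n + 1) ∣ (∑ j ∈ S \ range (n + 1), f j + ∑ j ∈ range (n+1), f j)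
      - ∑ j ∈ range (n + 1), f j := by
    rw [add_sub_cancel_right]
    apply Finset.dvd_sum
    intro j hj
    rw [Finset.mem_sdiff, Finset.mem_range] at hj
    exact dvd_trans (pow_dvd_pow _ (by omega)) (hf j)
  exact coeff_eq_of_dvd this (Nat.lt_succ_self n)

lemma hasProd_of {f : ℕ → ℚ⟦X⟧} (hf : ∀ j, (X : ℚ⟦X⟧) ^ (j + 1) ∣ f j - 1) :
    HasProd f (PowerSeries.mk fun n => coeff n (∏ j ∈ range (n + 1), f j)) := by
  apply coeff_stab_tendsto
  intro n S hS
  rw [coeff_prod_stab hf n S hS, coeff_mk]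

lemma hasSum_of {f : ℕ → ℚ⟦X⟧} (hf : ∀ j, (X : ℚ⟦X⟧) ^ (j + 1) ∣ f j) :
    HasSum f (PowerSeries.mk fun n => coeff n (∑ j ∈ range (n + 1), f j)) := by
  apply coeff_stab_tendsto
  intro n S hS
  rw [coeff_sum_stab hf n S hS, coeff_mk]


section Counting

open scoped Classical

/-- From Archive/Wiedijk100Theorems/Partition.lean -/
noncomputable def indicatorSeries (α : Type*) [Semiring α] (s : Set ℕ) : PowerSeries α :=
  PowerSeries.mk fun n => if n ∈ s then 1 else 0

theorem coeff_indicator {α : Type*} (s : Set ℕ) [Semiring α] (n : ℕ) :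
    coeff (R := α) n (indicatorSeries _ s) = if n ∈ s then 1 else 0 :=
  coeff_mk _ _

-- The main workhorse, copied from Archive/Wiedijk100Theorems/Partition.lean.
theorem partialGF_prop (α : Type*) [CommSemiring α] (n : ℕ) (s : Finset ℕ) (hs : ∀ i ∈ s, 0 < i)
    (c : ℕ → Set ℕ) (hc : ∀ i, i ∉ s → 0 ∈ c i) :
    #{p : n.Partition | (∀ j, p.parts.count j ∈ c j) ∧ ∀ j ∈ p.parts, j ∈ s} =
      coeff n (∏ i ∈ s, indicatorSeries α ((· * i) '' c i)) := by
  simp_rw [coeff_prod, coeff_indicator, prod_boole, sum_boole]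
  apply congr_arg
  simp only [mem_univ, forall_true_left, not_and, not_forall, exists_prop,
    Set.mem_image, not_exists]
  set φ : (a : Nat.Partition n) →
    a ∈ filter (fun p ↦ (∀ (j : ℕ), Multiset.count j p.parts ∈ c j) ∧ ∀ j ∈ p.parts, j ∈ s) univ →
    ℕ →₀ ℕ := fun p _ => {
      toFun := fun i => Multiset.count i p.parts • i
      support := Finset.filter (fun i => i ≠ 0) p.parts.toFinset
      mem_support_toFun := fun a => by
        simp only [smul_eq_mul, ne_eq, mul_eq_zero, Multiset.count_eq_zero]
        rw [not_or, not_not]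
        simp only [Multiset.mem_toFinset, not_not, mem_filter] }
  refine Finset.card_bij φ ?_ ?_ ?_
  · intro a ha
    simp only [φ, not_forall, not_exists, not_and, exists_prop, mem_filter]
    rw [mem_finsuppAntidiag]
    dsimp only [ne_eq, smul_eq_mul, id_eq, eq_mpr_eq_cast, le_eq_subset, Finsupp.coe_mk]
    simp only [mem_univ, forall_true_left, not_and, not_forall, exists_prop,
      mem_filter, true_and] at ha
    refine ⟨⟨?_, fun i ↦ ?_⟩, fun i _ ↦ ⟨a.parts.count i, ha.1 i, rfl⟩⟩
    · conv_rhs => simp [← a.parts_sum]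
      rw [sum_multiset_count_of_subset _ s]
      · simp only [smul_eq_mul]
      · intro i
        simp only [Multiset.mem_toFinset, not_not, mem_filter]
        apply ha.2
    · simp only [ne_eq, Multiset.mem_toFinset, not_not, mem_filter, and_imp]
      exact fun hi _ ↦ ha.2 i hi
  · intro p₁ hp₁ p₂ hp₂ h
    apply Nat.Partition.ext
    simp only [true_and, mem_univ, mem_filter] at hp₁ hp₂
    ext i
    simp only [φ, ne_eq, Multiset.mem_toFinset, not_not, smul_eq_mul, Finsupp.mk.injEq] at h
    by_cases hi : i = 0
    · rw [hi]
      rw [Multiset.count_eq_zero_of_notMem]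
      · rw [Multiset.count_eq_zero_of_notMem]
        intro a; exact Nat.lt_irrefl 0 (hs 0 (hp₂.2 0 a))
      intro a; exact Nat.lt_irrefl 0 (hs 0 (hp₁.2 0 a))
    · rw [← mul_left_inj' hi]
      rw [funext_iff] at h
      exact h.2 i
  · simp only [φ, mem_filter, mem_finsuppAntidiag, mem_univ, exists_prop, true_and, and_assoc]
    rintro f ⟨hf, hf₃, hf₄⟩
    have hf' : f ∈ finsuppAntidiag s n := mem_finsuppAntidiag.mpr ⟨hf, hf₃⟩
    simp only [mem_finsuppAntidiag] at hf'
    refine ⟨⟨∑ i ∈ s, Multiset.replicate (f i / i) i, ?_, ?_⟩, ?_, ?_, ?_⟩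
    · intro i hi
      simp only [exists_prop, Multiset.mem_sum, Finset.mem_map, Function.Embedding.coeFn_mk] at hi
      rcases hi with ⟨t, ht, z⟩
      apply hs
      rwa [Multiset.eq_of_mem_replicate z]
    · simp_rw [Multiset.sum_sum, Multiset.sum_replicate, Nat.nsmul_eq_mul]
      rw [← hf'.1]
      refine sum_congr rfl fun i hi => Nat.div_mul_cancel ?_
      rcases hf₄ i hi with ⟨w, _, hw₂⟩
      rw [← hw₂]
      exact dvd_mul_left _ _
    · intro i
      simp_rw [Multiset.count_sum', Multiset.count_replicate, sum_ite_eq']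
      split_ifs with h
      · rcases hf₄ i h with ⟨w, hw₁, hw₂⟩
        rwa [← hw₂, Nat.mul_div_cancel _ (hs i h)]
      · exact hc _ h
    · intro i hi
      rw [Multiset.mem_sum] at hi
      rcases hi with ⟨j, hj₁, hj₂⟩
      rwa [Multiset.eq_of_mem_replicate hj₂]
    · ext i
      simp_rw [Multiset.count_sum', Multiset.count_replicate, sum_ite_eq']
      simp only [ne_eq, Multiset.mem_toFinset, not_not, smul_eq_mul, ite_mul,
        zero_mul, Finsupp.coe_mk]
      split_ifs with h
      · apply Nat.div_mul_cancel
        rcases hf₄ i h with ⟨w, _, hw₂⟩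
        apply Dvd.intro_left _ hw₂
      · apply symm
        rw [← Finsupp.notMem_support_iff]
        exact notMem_mono hf'.2 h


end Counting

section Spec

/-- number of ℓ-distinct partitions of n -/
noncomputable def pcount (ℓ n : ℕ) : ℕ :=
  #(Finset.univ.filter fun p : Nat.Partition n => ∀ a ∈ p.parts, p.parts.count a < ℓ)

/-- number of ℓ-distinct partitions of n containing m -/
noncomputable def rcount (ℓ m n : ℕ) : ℕ :=
  #(Finset.univ.filter fun p : Nat.Partition n =>
    (∀ a ∈ p.parts, p.parts.count a < ℓ) ∧ m ∈ p.parts)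

noncomputable def gs (ℓ i : ℕ) : ℚ⟦X⟧ := indicatorSeries ℚ ((· * i) '' {k | k < ℓ})

noncomputable def fs (ℓ m : ℕ) : ℚ⟦X⟧ := indicatorSeries ℚ ((· * m) '' {k | 0 < k ∧ k < ℓ})

open scoped Classical in
lemma card_filter_congr {α : Type*} [Fintype α] (p q : α → Prop) [DecidablePred p]
    [DecidablePred q] (h : ∀ a, p a ↔ q a) :
    #(Finset.univ.filter p) = #(Finset.univ.filter q) := by
  congr 1
  apply Finset.filter_congr
  exact fun x _ => h x

lemma part_mem_Icc {n N : ℕ} (hn : n ≤ N) (p : Nat.Partition n) {j : ℕ} (hj : j ∈ p.parts) :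
    j ∈ Finset.Icc 1 N := by
  rw [Finset.mem_Icc]
  refine ⟨p.parts_pos hj, le_trans ?_ hn⟩
  conv_rhs => rw [← p.parts_sum]
  exact Multiset.single_le_sum (fun x _ => Nat.zero_le x) _ hj

open scoped Classical in
lemma pcount_coeff {ℓ : ℕ} (hℓ : 2 ≤ ℓ) (n N : ℕ) (hn : n ≤ N) :
    (pcount ℓ n : ℚ) = coeff n (∏ i ∈ Finset.Icc 1 N, gs ℓ i) := by
  have := partialGF_prop ℚ n (Finset.Icc 1 N) (fun i hi => (Finset.mem_Icc.mp hi).1)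
    (fun _ => {k | k < ℓ}) (fun _ _ => by simp only [Set.mem_setOf_eq]; omega)
  have h2 : (∏ i ∈ Finset.Icc 1 N, gs ℓ i)
      = ∏ i ∈ Finset.Icc 1 N, indicatorSeries ℚ ((fun x => x * i) '' (fun _ => {k | k < ℓ}) i) :=
    rfl
  rw [h2, ← this]
  unfold pcount
  norm_cast
  apply card_filter_congr
  intro p
  constructor
  · intro h
    refine ⟨fun j => ?_, fun j hj => part_mem_Icc hn p hj⟩
    by_cases hj : j ∈ p.parts
    · exact h j hj
    · show Multiset.count j p.parts ∈ {k | k < ℓ}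
      simp only [Set.mem_setOf_eq, Multiset.count_eq_zero_of_notMem hj]
      omega
  · rintro ⟨h1, -⟩ a _
    exact h1 a

open scoped Classical in
lemma rcount_coeff {ℓ : ℕ} (hℓ : 2 ≤ ℓ) (m n N : ℕ) (hn : n ≤ N) (hm1 : 1 ≤ m) (hmN : m ≤ N) :
    (rcount ℓ m n : ℚ) = coeff n (fs ℓ m * ∏ i ∈ Finset.Icc 1 N \ {m}, gs ℓ i) := by
  have hm : m ∈ Finset.Icc 1 N := Finset.mem_Icc.mpr ⟨hm1, hmN⟩
  have := partialGF_prop ℚ n (Finset.Icc 1 N) (fun i hi => (Finset.mem_Icc.mp hi).1)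
    (fun i => if i = m then {k | 0 < k ∧ k < ℓ} else {k | k < ℓ})
    (fun i hi => by
      have : i ≠ m := fun h => hi (h ▸ hm)
      simp only [this, if_false, Set.mem_setOf_eq]; omega)
  rw [Finset.prod_eq_prod_diff_singleton_mul hm] at this
  have h2 : (fs ℓ m * ∏ i ∈ Finset.Icc 1 N \ {m}, gs ℓ i)
      = (∏ x ∈ Finset.Icc 1 N \ {m}, indicatorSeries ℚ ((fun y => y * x) ''
          (fun i => if i = m then {k | 0 < k ∧ k < ℓ} else {k | k < ℓ}) x)) *
        indicatorSeries ℚ ((fun x => x * m) ''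
          (fun i => if i = m then {k | 0 < k ∧ k < ℓ} else {k | k < ℓ}) m) := by
    rw [mul_comm]
    congr 1
    · apply Finset.prod_congr rfl
      intro i hi
      rw [Finset.mem_sdiff, Finset.mem_singleton] at hi
      show gs ℓ i = indicatorSeries ℚ ((fun y => y * i) '' (if i = m then _ else {k | k < ℓ}))
      rw [if_neg hi.2]
      rfl
    · show fs ℓ m = indicatorSeries ℚ ((fun x => x * m) '' (if m = m then {k | 0 < k ∧ k < ℓ} else _))
      rw [if_pos rfl]
      rfl
  rw [h2, ← this]
  unfold rcount
  norm_cast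
  have epos : (fun i => if i = m then ({k | 0 < k ∧ k < ℓ} : Set ℕ) else {k | k < ℓ}) m
      = {k | 0 < k ∧ k < ℓ} := by simp
  have eneg : ∀ j : ℕ, j ≠ m →
      (fun i => if i = m then ({k | 0 < k ∧ k < ℓ} : Set ℕ) else {k | k < ℓ}) j
      = {k | k < ℓ} := fun j hj => by simp [hj]
  apply card_filter_congr
  intro p
  constructor
  · rintro ⟨h1, h2⟩
    refine ⟨fun j => ?_, fun j hj => part_mem_Icc hn p hj⟩
    by_cases hj : j = m
    · subst hj
      rw [if_pos rfl]
      exact ⟨Multiset.count_pos.mpr h2, h1 _ h2⟩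
    · rw [if_neg hj]
      show Multiset.count j p.parts < ℓ
      by_cases hjp : j ∈ p.parts
      · exact h1 j hjp
      · rw [Multiset.count_eq_zero_of_notMem hjp]
        omega
  · rintro ⟨h1, -⟩
    have hm' := h1 m
    rw [if_pos rfl] at hm'
    obtain ⟨hpos, hlt⟩ := hm'
    refine ⟨fun a _ => ?_, Multiset.count_pos.mp hpos⟩
    by_cases ha : a = m
    · subst ha
      exact hlt
    · have := h1 a
      rw [if_neg ha] at this
      exact this

lemma gs_eq {ℓ : ℕ} (hℓ : 1 ≤ ℓ) {i : ℕ} (hi : 1 ≤ i) :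
    gs ℓ i = ∑ j ∈ range ℓ, (X : ℚ⟦X⟧) ^ (j * i) := by
  ext n
  rw [gs, coeff_indicator, map_sum]
  simp_rw [coeff_X_pow]
  by_cases h : ∃ j, j < ℓ ∧ j * i = n
  · obtain ⟨j₀, hj₀, hj₀n⟩ := h
    rw [if_pos ⟨j₀, hj₀, hj₀n⟩]
    rw [Finset.sum_eq_single j₀]
    · rw [if_pos hj₀n.symm]
    · intro b _ hb
      rw [if_neg]
      intro hbn
      exact hb (Nat.eq_of_mul_eq_mul_right hi (by omega))
    · intro hj
      exact absurd (Finset.mem_range.mpr hj₀) (fun c => hj c)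
  · rw [if_neg (by
      rintro ⟨j, hj, hjn⟩
      exact h ⟨j, hj, hjn⟩)]
    symm
    apply Finset.sum_eq_zero
    intro j hj
    rw [if_neg]
    intro hn
    exact h ⟨j, Finset.mem_range.mp hj, hn.symm⟩

lemma fs_eq_gs_sub_one {ℓ : ℕ} (hℓ : 1 ≤ ℓ) {m : ℕ} (hm : 1 ≤ m) :
    fs ℓ m = gs ℓ m - 1 := by
  have : (1 : ℚ⟦X⟧) = X ^ (0 * m) := by rw [Nat.zero_mul, pow_zero]
  rw [gs_eq hℓ hm, eq_sub_iff_add_eq]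
  rw [Finset.range_eq_Ico, Finset.sum_eq_sum_Ico_succ_bot hℓ]
  rw [Nat.zero_mul, pow_zero, add_comm]
  congr 1
  ext n
  rw [fs, coeff_indicator, map_sum]
  simp_rw [coeff_X_pow]
  by_cases h : ∃ j, (0 < j ∧ j < ℓ) ∧ j * m = n
  · obtain ⟨j₀, hj₀, hj₀n⟩ := h
    rw [if_pos ⟨j₀, hj₀, hj₀n⟩]
    rw [Finset.sum_eq_single j₀]
    · rw [if_pos hj₀n.symm]
    · intro b _ hb
      rw [if_neg]
      intro hbn
      exact hb (Nat.eq_of_mul_eq_mul_right hm (by omega))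
    · intro hj
      exact absurd (Finset.mem_Ico.mpr ⟨hj₀.1, hj₀.2⟩) (fun c => hj c)
  · rw [if_neg (by rintro ⟨j, hj, hjn⟩; exact h ⟨j, hj, hjn⟩)]
    symm
    apply Finset.sum_eq_zero
    intro j hj
    rw [Finset.mem_Ico] at hj
    rw [if_neg]
    intro hn
    exact h ⟨j, ⟨hj.1, hj.2⟩, hn.symm⟩

lemma gs_mul_one_sub {ℓ : ℕ} (hℓ : 1 ≤ ℓ) {i : ℕ} (hi : 1 ≤ i) :
    gs ℓ i * (1 - X ^ i) = 1 - (X : ℚ⟦X⟧) ^ (ℓ * i) := by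
  have h := geom_sum_mul (X ^ i : ℚ⟦X⟧) ℓ
  rw [gs_eq hℓ hi]
  have e : ∀ j : ℕ, ((X : ℚ⟦X⟧) ^ i) ^ j = X ^ (j * i) := fun j => by
    rw [← pow_mul, Nat.mul_comm]
  simp_rw [e] at h
  linear_combination -h

lemma fs_mul_one_sub {ℓ : ℕ} (hℓ : 1 ≤ ℓ) {m : ℕ} (hm : 1 ≤ m) :
    fs ℓ m * (1 - X ^ (ℓ * m)) = gs ℓ m * ((X : ℚ⟦X⟧) ^ m - X ^ (ℓ * m)) := by
  have h1 := gs_mul_one_sub hℓ hm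
  have h2 := fs_eq_gs_sub_one hℓ hm
  linear_combination (1 - (X : ℚ⟦X⟧) ^ (ℓ * m)) * h2 + h1

end Spec


section Hook

variable {n : ℕ} (p : Nat.Partition n)



variable {n : ℕ} (p : Nat.Partition n)

lemma sortedList_length : ((p.parts.sort (· ≤ ·)).reverse).length = Multiset.card p.parts := by
  rw [List.length_reverse, Multiset.length_sort]

lemma sortedList_anti {i k : ℕ} (hk : k < i) (hi : i < ((p.parts.sort (· ≤ ·)).reverse).length) :
    ((p.parts.sort (· ≤ ·)).reverse)[i]'hi ≤
      ((p.parts.sort (· ≤ ·)).reverse)[k]'(lt_trans hk hi) := by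
  have hs : List.Pairwise (fun a b => b ≤ a) ((p.parts.sort (· ≤ ·)).reverse) := by
    rw [List.pairwise_reverse]
    exact Multiset.pairwise_sort (s := p.parts) (r := (· ≤ ·))
  exact List.pairwise_iff_getElem.mp hs k i _ hi hk

lemma partAt_eq_getElem {i : ℕ} (hi : i < ((p.parts.sort (· ≤ ·)).reverse).length) :
    partAt p i = ((p.parts.sort (· ≤ ·)).reverse)[i]'hi :=
  List.getD_eq_getElem _ 0 hi

lemma partAt_eq_zero {i : ℕ} (hi : Multiset.card p.parts ≤ i) : partAt p i = 0 := by
  apply List.getD_eq_default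
  rwa [sortedList_length]

lemma partAt_anti {i k : ℕ} (hk : k ≤ i) : partAt p i ≤ partAt p k := by
  rcases eq_or_lt_of_le hk with rfl | hk'
  · exact le_refl _
  by_cases hi : i < ((p.parts.sort (· ≤ ·)).reverse).length
  · rw [partAt_eq_getElem p hi, partAt_eq_getElem p (lt_trans hk' hi)]
    exact sortedList_anti p hk' hi
  · push_neg at hi
    rw [partAt_eq_zero p (by rwa [sortedList_length] at hi)]
    exact Nat.zero_le _

lemma partAt_mem {i : ℕ} (hi : i < Multiset.card p.parts) : partAt p i ∈ p.parts := by
  have hi' : i < ((p.parts.sort (· ≤ ·)).reverse).length := by rwa [sortedList_length]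
  rw [partAt_eq_getElem p hi']
  have : ((p.parts.sort (· ≤ ·)).reverse)[i]'hi' ∈ (p.parts.sort (· ≤ ·)).reverse :=
    List.getElem_mem _
  rw [List.mem_reverse, Multiset.mem_sort] at this
  exact this

lemma colAt_eq_countP (j : ℕ) :
    colAt p j = List.countP (fun a => decide (j < a)) ((p.parts.sort (· ≤ ·)).reverse) := by
  rw [List.countP_reverse, List.countP_eq_length_filter]
  unfold colAt
  conv_lhs => rw [← Multiset.sort_eq (s := p.parts) (r := (· ≤ ·))]
  rw [Multiset.filter_coe, Multiset.coe_card]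

lemma colAt_le_card (j : ℕ) : colAt p j ≤ Multiset.card p.parts :=
  Multiset.card_le_card (Multiset.filter_le _ _)

lemma parts_card_le : Multiset.card p.parts ≤ n := by
  have h1 : Multiset.card p.parts • 1 ≤ p.parts.sum :=
    Multiset.card_nsmul_le_sum fun x hx => p.parts_pos hx
  rwa [smul_eq_mul, mul_one, p.parts_sum] at h1

lemma lt_partAt_iff (i j : ℕ) : j < partAt p i ↔ i < colAt p j := by
  constructor
  · intro h
    have hi : i < ((p.parts.sort (· ≤ ·)).reverse).length := by
      by_contra hc
      push_neg at hc
      rw [sortedList_length] at hc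
      rw [partAt_eq_zero p hc] at h
      omega
    rw [colAt_eq_countP]
    have hlen : (((p.parts.sort (· ≤ ·)).reverse).take (i + 1)).length = i + 1 := by
      rw [List.length_take]
      omega
    have hcount : List.countP (fun a => decide (j < a))
        (((p.parts.sort (· ≤ ·)).reverse).take (i + 1))
        = (((p.parts.sort (· ≤ ·)).reverse).take (i + 1)).length := by
      rw [List.countP_eq_length]
      intro a ha
      rw [List.mem_iff_getElem] at ha
      obtain ⟨k, hk, rfl⟩ := ha
      rw [List.getElem_take]
      simp only [decide_eq_true_eq]
      have hki : k ≤ i := by rw [hlen] at hk; omega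
      rcases eq_or_lt_of_le hki with rfl | hki'
      · rw [← partAt_eq_getElem p]
        omega
      · have h2 := sortedList_anti p hki' hi
        rw [← partAt_eq_getElem p hi] at h2
        omega
    have hsplit : List.countP (fun a => decide (j < a)) ((p.parts.sort (· ≤ ·)).reverse)
        = List.countP (fun a => decide (j < a)) (((p.parts.sort (· ≤ ·)).reverse).take (i + 1))
          + List.countP (fun a => decide (j < a)) (((p.parts.sort (· ≤ ·)).reverse).drop (i + 1)) := by
      rw [← List.countP_append, List.take_append_drop]
    omega
  · intro h
    by_contra hc
    push_neg at hc
    have key : colAt p j ≤ i := by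
      rw [colAt_eq_countP]
      by_cases hi : i < ((p.parts.sort (· ≤ ·)).reverse).length
      · have hdrop : List.countP (fun a => decide (j < a))
            (((p.parts.sort (· ≤ ·)).reverse).drop i) = 0 := by
          rw [List.countP_eq_zero]
          intro a ha
          rw [List.mem_iff_getElem] at ha
          obtain ⟨k, hk, rfl⟩ := ha
          rw [List.getElem_drop]
          simp only [decide_eq_true_eq, not_lt]
          have hk' : i + k < ((p.parts.sort (· ≤ ·)).reverse).length := by
            rw [List.length_drop] at hk
            omega
          have hle : ((p.parts.sort (· ≤ ·)).reverse)[i + k]'hk' ≤ partAt p i := by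
            rcases Nat.eq_zero_or_pos k with rfl | hkpos
            · rw [partAt_eq_getElem p hi]
              exact le_of_eq (by congr 1)
            · rw [partAt_eq_getElem p hi]
              exact sortedList_anti p (by omega) hk'
          omega
        have hsplit : List.countP (fun a => decide (j < a)) ((p.parts.sort (· ≤ ·)).reverse)
            = List.countP (fun a => decide (j < a)) (((p.parts.sort (· ≤ ·)).reverse).take i)
              + List.countP (fun a => decide (j < a)) (((p.parts.sort (· ≤ ·)).reverse).drop i) := by
          rw [← List.countP_append, List.take_append_drop]
        have htake : List.countP (fun a => decide (j < a))
            (((p.parts.sort (· ≤ ·)).reverse).take i)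
            ≤ (((p.parts.sort (· ≤ ·)).reverse).take i).length := List.countP_le_length
        rw [List.length_take] at htake
        omega
      · push_neg at hi
        calc List.countP (fun a => decide (j < a)) ((p.parts.sort (· ≤ ·)).reverse)
            ≤ ((p.parts.sort (· ≤ ·)).reverse).length := List.countP_le_length
        _ ≤ i := hi
    omega

lemma count_eq_card_filter (s : Multiset ℕ) (v : ℕ) :
    s.count v = Multiset.card (s.filter (· = v)) := by
  rw [Multiset.count_eq_card_filter_eq]
  congr 1
  ext a
  simp [eq_comm]

lemma colAt_succ_add_count {v : ℕ} (hv1 : 1 ≤ v) :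
    colAt p v + p.parts.count v = colAt p (v - 1) := by
  classical
  unfold colAt
  rw [count_eq_card_filter]
  rw [← Multiset.card_add, Multiset.filter_add_filter]
  have h1 : Multiset.filter (fun a => v < a ∨ a = v) p.parts
      = Multiset.filter (fun a => v - 1 < a) p.parts := by
    apply Multiset.filter_congr
    intro a _
    constructor
    · intro h; omega
    · intro h; omega
  have h2 : Multiset.filter (fun a => v < a ∧ a = v) p.parts = 0 := by
    rw [Multiset.filter_eq_nil]
    intro a _ h
    omega
  rw [h1, h2, add_zero]

lemma hookCount_one : hookCount p 1 = p.parts.toFinset.card := by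
  unfold hookCount
  apply Finset.card_bij (fun ij _ => ij.2 + 1)
  · rintro ⟨i, j⟩ hij
    rw [Finset.mem_filter] at hij
    dsimp only at hij
    obtain ⟨-, h1, h2⟩ := hij
    have h3 : i < colAt p j := (lt_partAt_iff p i j).mp h1
    have h4 : partAt p i = j + 1 := by omega
    rw [Multiset.mem_toFinset, ← h4]
    apply partAt_mem
    exact lt_of_lt_of_le h3 (colAt_le_card p j)
  · rintro ⟨i, j⟩ hij ⟨i', j'⟩ hij' h
    rw [Finset.mem_filter] at hij hij'
    dsimp only at hij hij'
    obtain ⟨-, g1, g2⟩ := hij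
    obtain ⟨-, g1', g2'⟩ := hij'
    have hj : j = j' := by omega
    subst hj
    have h3 : i < colAt p j := (lt_partAt_iff p i j).mp g1
    have h3' : i' < colAt p j := (lt_partAt_iff p i' j).mp g1'
    have hci : colAt p j = i + 1 := by omega
    have hci' : colAt p j = i' + 1 := by omega
    have : i = i' := by omega
    subst this
    rfl
  · intro v hv
    rw [Multiset.mem_toFinset] at hv
    have hv1 : 1 ≤ v := p.parts_pos hv
    have hvn : v ≤ n := by
      conv_rhs => rw [← p.parts_sum]
      exact Multiset.single_le_sum (fun x _ => Nat.zero_le x) _ hv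
    set c := colAt p (v - 1) with hc
    have hcount : 1 ≤ p.parts.count v := Multiset.count_pos.mpr hv
    have hcv : colAt p v + p.parts.count v = c := colAt_succ_add_count p hv1
    have hc1 : 1 ≤ c := by omega
    have hcn : c ≤ n := le_trans (colAt_le_card p _) (parts_card_le p)
    refine ⟨(c - 1, v - 1), ?_, by omega⟩
    have hlt : c - 1 < c := by omega
    have hge : v - 1 < partAt p (c - 1) := (lt_partAt_iff p (c - 1) (v - 1)).mpr hlt
    have hle : partAt p (c - 1) ≤ v := by
      by_contra hcon
      push_neg at hcon
      have : c - 1 < colAt p v := (lt_partAt_iff p (c - 1) v).mp hcon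
      omega
    have hpart : partAt p (c - 1) = v := by omega
    rw [Finset.mem_filter, Finset.mem_product]
    dsimp only
    rw [Finset.mem_range, Finset.mem_range]
    refine ⟨⟨by omega, by omega⟩, by omega, ?_⟩
    rw [hpart, ← hc]
    omega


end Hook

section Assembly

open Finset

lemma dCount_eq_sum_rcount (ℓ n : ℕ) :
    dCount ℓ 1 n = ∑ m ∈ range (n + 1), rcount ℓ (m + 1) n := by
  unfold dCount
  have h1 : ∀ p ∈ Finset.univ.filter
      (fun p : Nat.Partition n => ∀ a ∈ p.parts, p.parts.count a < ℓ),
      hookCount p 1 = #((range (n + 1)).filter fun m => m + 1 ∈ p.parts) := by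
    intro p _
    rw [hookCount_one p]
    have hb : #((range (n + 1)).filter fun m => m + 1 ∈ p.parts) = p.parts.toFinset.card := by
      apply Finset.card_bij (fun m _ => m + 1)
      · intro m hm
        rw [Finset.mem_filter] at hm
        rw [Multiset.mem_toFinset]
        exact hm.2
      · intro a _ b _ h
        omega
      · intro v hv
        rw [Multiset.mem_toFinset] at hv
        have hv1 : 1 ≤ v := p.parts_pos hv
        have hvn : v ≤ n := by
          conv_rhs => rw [← p.parts_sum]
          exact Multiset.single_le_sum (fun x _ => Nat.zero_le x) _ hv
        refine ⟨v - 1, ?_, by omega⟩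
        rw [Finset.mem_filter, Finset.mem_range]
        have : v - 1 + 1 = v := by omega
        rw [this]
        exact ⟨by omega, hv⟩
    rw [← hb]
  rw [Finset.sum_congr rfl h1]
  simp_rw [Finset.card_filter]
  rw [Finset.sum_comm]
  apply Finset.sum_congr rfl
  intro m _
  rw [rcount, ← Finset.filter_filter, Finset.card_filter]

lemma rcount_eq_zero (ℓ m n : ℕ) (h : n < m) : rcount ℓ m n = 0 := by
  rw [rcount, Finset.card_eq_zero, Finset.filter_eq_empty_iff]
  rintro p - ⟨-, hm⟩
  have : m ≤ n := by
    conv_rhs => rw [← p.parts_sum]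
    exact Multiset.single_le_sum (fun x _ => Nat.zero_le x) _ hm
  omega

lemma prod_range_eq_Icc (h : ℕ → ℚ⟦X⟧) (N : ℕ) :
    ∏ j ∈ range N, h (j + 1) = ∏ i ∈ Finset.Icc 1 N, h i := by
  apply Finset.prod_bij (fun j _ => j + 1)
  · intro j hj
    rw [Finset.mem_range] at hj
    rw [Finset.mem_Icc]
    omega
  · intro a _ b _ hab
    omega
  · intro i hi
    rw [Finset.mem_Icc] at hi
    exact ⟨i - 1, Finset.mem_range.mpr (by omega), by omega⟩
  · intro j _
    rfl

end Assembly

end DGF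

open DGF Finset in
theorem dCount_one_generating_function (ℓ : ℕ) (hℓ : 2 ≤ ℓ) :
    (PowerSeries.mk fun n => (dCount ℓ 1 n : ℚ)) =
      (∏' j : ℕ, (1 - (X : ℚ⟦X⟧) ^ (ℓ * (j + 1)))) *
        (∏' j : ℕ, (1 - (X : ℚ⟦X⟧) ^ (j + 1)))⁻¹ *
        ∑' m : ℕ, (X : ℚ⟦X⟧) ^ (m + 1) * (1 - (X : ℚ⟦X⟧) ^ ((ℓ - 1) * (m + 1))) *
          (1 - (X : ℚ⟦X⟧) ^ (ℓ * (m + 1)))⁻¹ := by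
  have hℓ1 : 1 ≤ ℓ := by omega
  -- infinite product / sum limits
  have hA : HasProd (fun j : ℕ => 1 - (X : ℚ⟦X⟧) ^ (ℓ * (j + 1)))
      (PowerSeries.mk fun n => coeff n (∏ j ∈ range (n + 1), (1 - (X : ℚ⟦X⟧) ^ (ℓ * (j + 1))))) := by
    apply hasProd_of
    intro j
    have h1 : (1 : ℚ⟦X⟧) - X ^ (ℓ * (j + 1)) - 1 = -(X ^ (ℓ * (j + 1))) := by ring
    rw [h1, dvd_neg]
    exact pow_dvd_pow _ (Nat.le_mul_of_pos_left _ (by omega))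
  have hB : HasProd (fun j : ℕ => 1 - (X : ℚ⟦X⟧) ^ (j + 1))
      (PowerSeries.mk fun n => coeff n (∏ j ∈ range (n + 1), (1 - (X : ℚ⟦X⟧) ^ (j + 1)))) := by
    apply hasProd_of
    intro j
    have h1 : (1 : ℚ⟦X⟧) - X ^ (j + 1) - 1 = -(X ^ (j + 1)) := by ring
    rw [h1, dvd_neg]
  have hT : HasSum (fun m : ℕ => (X : ℚ⟦X⟧) ^ (m + 1) * (1 - (X : ℚ⟦X⟧) ^ ((ℓ - 1) * (m + 1))) *
      (1 - (X : ℚ⟦X⟧) ^ (ℓ * (m + 1)))⁻¹)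
      (PowerSeries.mk fun n => coeff n (∑ m ∈ range (n + 1),
        (X : ℚ⟦X⟧) ^ (m + 1) * (1 - (X : ℚ⟦X⟧) ^ ((ℓ - 1) * (m + 1))) *
          (1 - (X : ℚ⟦X⟧) ^ (ℓ * (m + 1)))⁻¹)) := by
    apply hasSum_of
    intro m
    exact (dvd_mul_right _ _).mul_right _
  rw [hA.tprod_eq, hB.tprod_eq, hT.tsum_eq]
  set P : ℚ⟦X⟧ := PowerSeries.mk fun n => (pcount ℓ n : ℚ) with hP
  set LA : ℚ⟦X⟧ := PowerSeries.mk fun n =>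
    coeff n (∏ j ∈ range (n + 1), (1 - (X : ℚ⟦X⟧) ^ (ℓ * (j + 1)))) with hLA
  set LB : ℚ⟦X⟧ := PowerSeries.mk fun n =>
    coeff n (∏ j ∈ range (n + 1), (1 - (X : ℚ⟦X⟧) ^ (j + 1))) with hLB
  set LT : ℚ⟦X⟧ := PowerSeries.mk fun n => coeff n (∑ m ∈ range (n + 1),
    (X : ℚ⟦X⟧) ^ (m + 1) * (1 - (X : ℚ⟦X⟧) ^ ((ℓ - 1) * (m + 1))) *
      (1 - (X : ℚ⟦X⟧) ^ (ℓ * (m + 1)))⁻¹) with hLT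
  -- agreement of P with truncated products
  have hPagree : ∀ i N : ℕ, i ≤ N → coeff i P = coeff i (∏ k ∈ Finset.Icc 1 N, gs ℓ k) := by
    intro i N hiN
    rw [hP, coeff_mk]
    exact pcount_coeff hℓ i N hiN
  -- the per-m identity : P * term m = mk (rcount (m+1))
  have key : ∀ m : ℕ, P * ((X : ℚ⟦X⟧) ^ (m + 1) * (1 - (X : ℚ⟦X⟧) ^ ((ℓ - 1) * (m + 1))) *
      (1 - (X : ℚ⟦X⟧) ^ (ℓ * (m + 1)))⁻¹)
      = PowerSeries.mk fun n => (rcount ℓ (m + 1) n : ℚ) := by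
    intro m
    have hexc : (X : ℚ⟦X⟧) ^ (m + 1) * (1 - (X : ℚ⟦X⟧) ^ ((ℓ - 1) * (m + 1)))
        = X ^ (m + 1) - X ^ (ℓ * (m + 1)) := by
      obtain ⟨l, rfl⟩ : ∃ l, ℓ = l + 2 := ⟨ℓ - 2, by omega⟩
      have h1 : (l + 2 - 1) * (m + 1) = (l + 1) * (m + 1) := by norm_num
      have h2 : (m + 1) + (l + 1) * (m + 1) = (l + 2) * (m + 1) := by ring
      rw [h1, mul_sub, mul_one, ← pow_add, h2]
    have hu : constantCoeff (1 - (X : ℚ⟦X⟧) ^ (ℓ * (m + 1))) ≠ 0 := by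
      have hne : ℓ * (m + 1) ≠ 0 := by positivity
      simp [zero_pow hne]
    have hmain : P * ((X : ℚ⟦X⟧) ^ (m + 1) - X ^ (ℓ * (m + 1)))
        = (PowerSeries.mk fun n => (rcount ℓ (m + 1) n : ℚ)) *
          (1 - (X : ℚ⟦X⟧) ^ (ℓ * (m + 1))) := by
      ext n
      set N := max n (m + 1) with hN
      have hnN : n ≤ N := le_max_left _ _
      have hmN : m + 1 ≤ N := le_max_right _ _
      have hmem : m + 1 ∈ Finset.Icc 1 N := Finset.mem_Icc.mpr ⟨by omega, hmN⟩
      have e1 : coeff n (P * ((X : ℚ⟦X⟧) ^ (m + 1) - X ^ (ℓ * (m + 1))))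
          = coeff n ((∏ k ∈ Finset.Icc 1 N, gs ℓ k) *
              ((X : ℚ⟦X⟧) ^ (m + 1) - X ^ (ℓ * (m + 1)))) := by
        rw [mul_comm P _, mul_comm _ ((X : ℚ⟦X⟧) ^ (m + 1) - X ^ (ℓ * (m + 1)))]
        exact coeff_mul_congr (fun i hi => hPagree i N (le_trans hi hnN))
      have e2 : coeff n ((PowerSeries.mk fun j => (rcount ℓ (m + 1) j : ℚ)) *
            (1 - (X : ℚ⟦X⟧) ^ (ℓ * (m + 1))))
          = coeff n ((fs ℓ (m + 1) * ∏ k ∈ Finset.Icc 1 N \ {m + 1}, gs ℓ k) *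
              (1 - (X : ℚ⟦X⟧) ^ (ℓ * (m + 1)))) := by
        rw [mul_comm (PowerSeries.mk fun j => (rcount ℓ (m + 1) j : ℚ)) _,
          mul_comm (fs ℓ (m + 1) * ∏ k ∈ Finset.Icc 1 N \ {m + 1}, gs ℓ k) _]
        apply coeff_mul_congr
        intro i hi
        rw [coeff_mk]
        exact rcount_coeff hℓ (m + 1) i N (le_trans hi hnN) (by omega) hmN
      have e3 : (∏ k ∈ Finset.Icc 1 N, gs ℓ k) *
            ((X : ℚ⟦X⟧) ^ (m + 1) - X ^ (ℓ * (m + 1)))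
          = (fs ℓ (m + 1) * ∏ k ∈ Finset.Icc 1 N \ {m + 1}, gs ℓ k) *
              (1 - (X : ℚ⟦X⟧) ^ (ℓ * (m + 1))) := by
        rw [Finset.prod_eq_prod_diff_singleton_mul hmem (gs ℓ)]
        have hfm := fs_mul_one_sub hℓ1 (m := m + 1) (by omega)
        linear_combination (-(∏ k ∈ Finset.Icc 1 N \ {m + 1}, gs ℓ k)) * hfm
      rw [e1, e2, e3]
    calc P * ((X : ℚ⟦X⟧) ^ (m + 1) * (1 - (X : ℚ⟦X⟧) ^ ((ℓ - 1) * (m + 1))) *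
        (1 - (X : ℚ⟦X⟧) ^ (ℓ * (m + 1)))⁻¹)
        = P * ((X : ℚ⟦X⟧) ^ (m + 1) - X ^ (ℓ * (m + 1))) *
            (1 - (X : ℚ⟦X⟧) ^ (ℓ * (m + 1)))⁻¹ := by rw [hexc, mul_assoc]
      _ = (PowerSeries.mk fun n => (rcount ℓ (m + 1) n : ℚ)) *
            ((1 - (X : ℚ⟦X⟧) ^ (ℓ * (m + 1))) * (1 - (X : ℚ⟦X⟧) ^ (ℓ * (m + 1)))⁻¹) := by
          rw [hmain, mul_assoc]
      _ = PowerSeries.mk fun n => (rcount ℓ (m + 1) n : ℚ) := by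
          rw [PowerSeries.mul_inv_cancel _ hu, mul_one]
  -- P * LT = LHS
  have hPLT : P * LT = PowerSeries.mk fun n => (dCount ℓ 1 n : ℚ) := by
    ext n
    have e1 : coeff n (P * LT) = coeff n (P * ∑ m ∈ range (n + 1),
        (X : ℚ⟦X⟧) ^ (m + 1) * (1 - (X : ℚ⟦X⟧) ^ ((ℓ - 1) * (m + 1))) *
          (1 - (X : ℚ⟦X⟧) ^ (ℓ * (m + 1)))⁻¹) := by
      apply coeff_mul_congr
      intro i hi
      rw [hLT, coeff_mk]
      exact (coeff_sum_stab (fun m => (dvd_mul_right _ _).mul_right _) i (range (n + 1))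
        (range_subset_range.mpr (by omega))).symm
    rw [e1, Finset.mul_sum]
    rw [map_sum]
    have e2 : ∀ m ∈ range (n + 1), coeff n (P * ((X : ℚ⟦X⟧) ^ (m + 1) *
        (1 - (X : ℚ⟦X⟧) ^ ((ℓ - 1) * (m + 1))) * (1 - (X : ℚ⟦X⟧) ^ (ℓ * (m + 1)))⁻¹))
        = (rcount ℓ (m + 1) n : ℚ) := by
      intro m _
      rw [key m, coeff_mk]
    rw [Finset.sum_congr rfl e2, coeff_mk, dCount_eq_sum_rcount]
    push_cast
    rfl
  -- P * LB = LA
  have hPLB : P * LB = LA := by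
    ext n
    have e1 : coeff n (P * LB) = coeff n (P * ∏ j ∈ range (n + 1),
        (1 - (X : ℚ⟦X⟧) ^ (j + 1))) := by
      apply coeff_mul_congr
      intro i hi
      rw [hLB, coeff_mk]
      refine (coeff_prod_stab (fun j => ?_) i (range (n + 1)) (range_subset_range.mpr (by omega))).symm
      have h1 : (1 : ℚ⟦X⟧) - X ^ (j + 1) - 1 = -(X ^ (j + 1)) := by ring
      rw [h1, dvd_neg]
    have e2 : coeff n (P * ∏ j ∈ range (n + 1), (1 - (X : ℚ⟦X⟧) ^ (j + 1)))
        = coeff n ((∏ k ∈ Finset.Icc 1 (n + 1), gs ℓ k) *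
            ∏ j ∈ range (n + 1), (1 - (X : ℚ⟦X⟧) ^ (j + 1))) := by
      rw [mul_comm P _, mul_comm (∏ k ∈ Finset.Icc 1 (n + 1), gs ℓ k) _]
      exact coeff_mul_congr (fun i hi => hPagree i (n + 1) (by omega))
    have e3 : (∏ k ∈ Finset.Icc 1 (n + 1), gs ℓ k) *
          ∏ j ∈ range (n + 1), (1 - (X : ℚ⟦X⟧) ^ (j + 1))
        = ∏ j ∈ range (n + 1), (1 - (X : ℚ⟦X⟧) ^ (ℓ * (j + 1))) := by
      have h4 : ∀ k ∈ Finset.Icc 1 (n + 1), gs ℓ k * (1 - (X : ℚ⟦X⟧) ^ k)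
          = 1 - (X : ℚ⟦X⟧) ^ (ℓ * k) := by
        intro k hk
        exact gs_mul_one_sub hℓ1 (Finset.mem_Icc.mp hk).1
      calc (∏ k ∈ Finset.Icc 1 (n + 1), gs ℓ k) *
            ∏ j ∈ range (n + 1), (1 - (X : ℚ⟦X⟧) ^ (j + 1))
          = (∏ k ∈ Finset.Icc 1 (n + 1), gs ℓ k) *
            ∏ k ∈ Finset.Icc 1 (n + 1), (1 - (X : ℚ⟦X⟧) ^ k) :=
            congrArg (HMul.hMul (∏ k ∈ Finset.Icc 1 (n + 1), gs ℓ k))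
              (prod_range_eq_Icc (fun i => 1 - (X : ℚ⟦X⟧) ^ i) (n + 1))
        _ = ∏ k ∈ Finset.Icc 1 (n + 1), (gs ℓ k * (1 - (X : ℚ⟦X⟧) ^ k)) :=
            Finset.prod_mul_distrib.symm
        _ = ∏ k ∈ Finset.Icc 1 (n + 1), (1 - (X : ℚ⟦X⟧) ^ (ℓ * k)) :=
            Finset.prod_congr rfl h4
        _ = ∏ j ∈ range (n + 1), (1 - (X : ℚ⟦X⟧) ^ (ℓ * (j + 1))) :=
            (prod_range_eq_Icc (fun i => 1 - (X : ℚ⟦X⟧) ^ (ℓ * i)) (n + 1)).symm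
    rw [e1, e2, e3, hLA, coeff_mk]
  -- LB is a unit
  have hLBu : constantCoeff LB ≠ 0 := by
    have : constantCoeff LB = coeff 0 LB := by rw [coeff_zero_eq_constantCoeff]
    rw [this, hLB, coeff_mk]
    rw [range_one, Finset.prod_singleton]
    simp [zero_pow]
  calc (PowerSeries.mk fun n => (dCount ℓ 1 n : ℚ)) = P * LT := hPLT.symm
    _ = P * LT * (LB * LB⁻¹) := by rw [PowerSeries.mul_inv_cancel _ hLBu, mul_one]
    _ = (P * LB) * LB⁻¹ * LT := by ring
    _ = LA * LB⁻¹ * LT := by rw [hPLB]
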